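/- Let p be a projection and e an effect, with cosine c and sine s. Then: (i) c² = 1 − p + pe + ep − e; (ii) s² = p − pe − ep + e; (iii) c² + s² = 1; (iv) c²p = pc² = pep and s²p⊥ = p⊥s² = p⊥ep⊥; (v) c and s commute with p, and c commutes with s; (vi) c, s, cs, c², s², and c²s² are all effects, c² ≤ c, and s² ≤ s. -/

import Mathlib

open scoped NNReal

section Aux

variable {A : Type*} [CStarAlgebra A]

lemma my_commute_cfcHom {a b : A} (ha : IsSelfAdjoint a) (hab : Commute b a)
    (g : C(spectrum ℝ a, ℝ)) : Commute b (cfcHom ha g) := by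
  have hclosed : IsClosed {x : C(spectrum ℝ a, ℝ) | b * cfcHom ha x = cfcHom ha x * b} :=
    isClosed_eq ((continuous_mul_left b).comp (cfcHom_isClosedEmbedding ha).continuous)
      ((continuous_mul_right b).comp (cfcHom_isClosedEmbedding ha).continuous)
  have htop : g ∈ (polynomialFunctions (spectrum ℝ a)).topologicalClosure := by
    rw [polynomialFunctions.topologicalClosure]; trivial
  have hmem : g ∈ closure ((polynomialFunctions (spectrum ℝ a) : Set C(spectrum ℝ a, ℝ))) := htop
  refine hclosed.closure_subset_iff.mpr ?_ hmem
  intro q hq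
  rw [SetLike.mem_coe, polynomialFunctions.eq_adjoin_X] at hq
  induction hq using Algebra.adjoin_induction with
  | mem x hx =>
    rw [Set.mem_singleton_iff] at hx
    subst hx
    have hX : (Polynomial.toContinuousMapOnAlgHom (spectrum ℝ a) Polynomial.X)
        = (ContinuousMap.id ℝ).restrict (spectrum ℝ a) := by
      ext x; simp
    rw [Set.mem_setOf_eq, hX, cfcHom_id ha]
    exact hab
  | algebraMap r =>
    rw [Set.mem_setOf_eq, AlgHomClass.commutes]
    exact (Algebra.commutes r b).symm
  | add x y hx hy hx' hy' =>
    rw [Set.mem_setOf_eq] at hx' hy' ⊢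
    rw [map_add, mul_add, add_mul, hx', hy']
  | mul x y hx hy hx' hy' =>
    rw [Set.mem_setOf_eq] at hx' hy' ⊢
    rw [map_mul, ← mul_assoc, hx', mul_assoc, hy', mul_assoc]

lemma my_commute_cfc {a b : A} (ha : IsSelfAdjoint a) (hab : Commute b a) (f : ℝ → ℝ) :
    Commute b (cfc f a) := by
  by_cases hf : ContinuousOn f (spectrum ℝ a)
  · rw [cfc_apply f a ha hf]
    exact my_commute_cfcHom ha hab _
  · rw [cfc_apply_of_not_continuousOn a hf]
    exact Commute.zero_right b

variable [PartialOrder A] [StarOrderedRing A]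

lemma my_sqrt_eq_real_cfc (a : A) (ha : 0 ≤ a) : CFC.sqrt a = cfc Real.sqrt a := by
  rw [CFC.sqrt_eq_cfc, cfc_nnreal_eq_real _ a ha]
  exact cfc_congr fun x _ => by rw [Real.sqrt]

lemma my_commute_sqrt {a b : A} (ha : 0 ≤ a) (hab : Commute b a) :
    Commute b (CFC.sqrt a) := by
  rw [my_sqrt_eq_real_cfc a ha]
  exact my_commute_cfc (.of_nonneg ha) hab _

lemma my_le_one_of_sq_le_one {c : A} (hc0 : 0 ≤ c) (h : c ^ 2 ≤ 1) : c ≤ 1 := by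
  have hsa : IsSelfAdjoint c := .of_nonneg hc0
  have hc2 : (0 : A) ≤ c ^ 2 := CStarAlgebra.pow_nonneg hc0 2
  have hn : ‖c ^ 2‖ ≤ 1 := (CStarAlgebra.norm_le_one_iff_of_nonneg _ hc2).mpr h
  have he : ‖c ^ 2‖ = ‖c‖ * ‖c‖ := by
    rw [pow_two]
    nth_rewrite 1 [← hsa.star_eq]
    exact CStarRing.norm_star_mul_self
  have : ‖c‖ ≤ 1 := by nlinarith [norm_nonneg c]
  exact (CStarAlgebra.norm_le_one_iff_of_nonneg c hc0).mp this

lemma my_mul_nonneg_of_commute {a b : A} (ha : 0 ≤ a) (hb : 0 ≤ b) (hab : Commute a b) :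
    0 ≤ a * b := by
  have h1 : Commute b (CFC.sqrt a) := my_commute_sqrt ha hab.symm
  have h2 : CFC.sqrt a * CFC.sqrt a = a := CFC.sqrt_mul_sqrt_self a ha
  have h3 : IsSelfAdjoint (CFC.sqrt a) := .of_nonneg (CFC.sqrt_nonneg a)
  calc (0 : A) ≤ CFC.sqrt a * b * star (CFC.sqrt a) := star_right_conjugate_nonneg hb _
    _ = a * b := by rw [h3.star_eq, mul_assoc, h1.eq, ← mul_assoc, h2]

end Aux

/-- In a unital C*-algebra, let `p` be a projection, `e` an effect,
and let `c` (the cosine) be the nonnegative square root of `pep + p⊥e⊥p⊥` and `s`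
(the sine) the nonnegative square root of `pe⊥p + p⊥ep⊥` (encoded by `0 ≤ c`,
`c² = pep + p⊥e⊥p⊥`, etc., which determines them uniquely). Then:
(i) `c² = 1 − p + pe + ep − e`; (ii) `s² = p − pe − ep + e`; (iii) `c² + s² = 1`;
(iv) `c²p = pc² = pep` and `s²p⊥ = p⊥s² = p⊥ep⊥`;
(v) `c` and `s` commute with `p` and with each other;
(vi) `c, s, cs, c², s², c²s²` are effects, `c² ≤ c`, and `s² ≤ s`. -/
theorem stmt5 {A : Type*} [CStarAlgebra A] [PartialOrder A] [StarOrderedRing A]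
    (p e c s : A) (hp : IsSelfAdjoint p) (hp2 : p ^ 2 = p)
    (he0 : 0 ≤ e) (he1 : e ≤ 1)
    (hc0 : 0 ≤ c) (hc2 : c ^ 2 = p * e * p + (1 - p) * (1 - e) * (1 - p))
    (hs0 : 0 ≤ s) (hs2 : s ^ 2 = p * (1 - e) * p + (1 - p) * e * (1 - p)) :
    c ^ 2 = 1 - p + p * e + e * p - e ∧
    s ^ 2 = p - p * e - e * p + e ∧
    c ^ 2 + s ^ 2 = 1 ∧
    (c ^ 2 * p = p * c ^ 2 ∧ c ^ 2 * p = p * e * p ∧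
      s ^ 2 * (1 - p) = (1 - p) * s ^ 2 ∧ s ^ 2 * (1 - p) = (1 - p) * e * (1 - p)) ∧
    (c * p = p * c ∧ s * p = p * s ∧ c * s = s * c) ∧
    ((0 ≤ c ∧ c ≤ 1) ∧ (0 ≤ s ∧ s ≤ 1) ∧ (0 ≤ c * s ∧ c * s ≤ 1) ∧
      (0 ≤ c ^ 2 ∧ c ^ 2 ≤ 1) ∧ (0 ≤ s ^ 2 ∧ s ^ 2 ≤ 1) ∧
      (0 ≤ c ^ 2 * s ^ 2 ∧ c ^ 2 * s ^ 2 ≤ 1) ∧ c ^ 2 ≤ c ∧ s ^ 2 ≤ s) := by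
  have hpp : p * p = p := by simpa [pow_two] using hp2
  -- (i)
  have h1 : c ^ 2 = 1 - p + p * e + e * p - e := by rw [hc2]; noncomm_ring [hpp]
  -- (ii)
  have h2 : s ^ 2 = p - p * e - e * p + e := by rw [hs2]; noncomm_ring [hpp]
  -- (iii)
  have h3 : c ^ 2 + s ^ 2 = 1 := by rw [h1, h2]; abel
  -- (iv)
  have hq : (1 - p) * p = 0 := by rw [sub_mul, one_mul, hpp, sub_self]
  have hq' : p * (1 - p) = 0 := by rw [mul_sub, mul_one, hpp, sub_self]
  have hqq : (1 - p) * (1 - p) = 1 - p := by noncomm_ring [hpp]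
  have h4a : c ^ 2 * p = p * e * p := by
    calc c ^ 2 * p = p * e * (p * p) + (1 - p) * (1 - e) * ((1 - p) * p) := by
          rw [hc2]; noncomm_ring
      _ = p * e * p := by rw [hq, mul_zero, add_zero, hpp]
  have h4b : p * c ^ 2 = p * e * p := by
    calc p * c ^ 2 = p * p * (e * p) + p * (1 - p) * ((1 - e) * (1 - p)) := by
          rw [hc2]; noncomm_ring
      _ = p * e * p := by rw [hpp, hq', zero_mul, add_zero, mul_assoc]
  have h4c : s ^ 2 * (1 - p) = (1 - p) * e * (1 - p) := by
    calc s ^ 2 * (1 - p)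
        = p * (1 - e) * (p * (1 - p)) + (1 - p) * e * ((1 - p) * (1 - p)) := by
          rw [hs2]; noncomm_ring
      _ = (1 - p) * e * (1 - p) := by rw [hq', mul_zero, zero_add, hqq]
  have h4d : (1 - p) * s ^ 2 = (1 - p) * e * (1 - p) := by
    calc (1 - p) * s ^ 2
        = (1 - p) * p * ((1 - e) * p) + (1 - p) * (1 - p) * (e * (1 - p)) := by
          rw [hs2]; noncomm_ring
      _ = (1 - p) * e * (1 - p) := by rw [hq, zero_mul, zero_add, hqq, mul_assoc]
  -- nonnegativity of squares
  have hc2nn : (0 : A) ≤ c ^ 2 := CStarAlgebra.pow_nonneg hc0 2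
  have hs2nn : (0 : A) ≤ s ^ 2 := CStarAlgebra.pow_nonneg hs0 2
  -- (v) commutation
  have hsqc : CFC.sqrt (c ^ 2) = c := CFC.sqrt_sq c hc0
  have hsqs : CFC.sqrt (s ^ 2) = s := CFC.sqrt_sq s hs0
  have hpc : Commute p c := by
    have : Commute p (c ^ 2) := by rw [commute_iff_eq, h4a, h4b]
    simpa [hsqc] using my_commute_sqrt hc2nn this
  have hps : Commute p s := by
    have hco : Commute p (s ^ 2) := by
      have h := h4c.trans h4d.symm
      have h' : s ^ 2 - s ^ 2 * p = s ^ 2 - p * s ^ 2 := by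
        simpa [mul_sub, sub_mul, mul_one, one_mul] using h
      rw [commute_iff_eq]
      exact (sub_right_injective h').symm
    simpa [hsqs] using my_commute_sqrt hs2nn hco
  have hcs : Commute c s := by
    have h : Commute c (s ^ 2) := by
      have hs2' : s ^ 2 = 1 - c ^ 2 := by rw [← h3]; abel
      rw [hs2']
      exact (Commute.one_right c).sub_right ((Commute.refl c).pow_right 2)
    simpa [hsqs] using my_commute_sqrt hs2nn h
  -- (vi) effects
  have hc2le1 : c ^ 2 ≤ 1 := by
    calc c ^ 2 = 1 - s ^ 2 := by rw [← h3]; abel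
      _ ≤ 1 := sub_le_self 1 hs2nn
  have hs2le1 : s ^ 2 ≤ 1 := by
    calc s ^ 2 = 1 - c ^ 2 := by rw [← h3]; abel
      _ ≤ 1 := sub_le_self 1 hc2nn
  have hcle1 : c ≤ 1 := my_le_one_of_sq_le_one hc0 hc2le1
  have hsle1 : s ≤ 1 := my_le_one_of_sq_le_one hs0 hs2le1
  have hcsnn : (0 : A) ≤ c * s := my_mul_nonneg_of_commute hc0 hs0 hcs
  have hcsle1 : c * s ≤ 1 := by
    have hsc : s * c = c * s := hcs.symm.eq
    have hkey : 1 - c * s = (c - s) * (c - s) + c * s := by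
      have hh : (c - s) * (c - s) = c ^ 2 + s ^ 2 - (c * s + c * s) := by
        noncomm_ring [hsc]
      rw [hh, h3]; abel
    have hsq : (0 : A) ≤ (c - s) * (c - s) := by
      have hsa : IsSelfAdjoint (c - s) :=
        (IsSelfAdjoint.of_nonneg hc0).sub (IsSelfAdjoint.of_nonneg hs0)
      simpa [hsa.star_eq] using star_mul_self_nonneg (c - s)
    have hnn : (0 : A) ≤ 1 - c * s := hkey ▸ add_nonneg hsq hcsnn
    exact sub_nonneg.mp hnn
  have hcs_sq : (c * s) ^ 2 = c ^ 2 * s ^ 2 := by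
    calc (c * s) ^ 2 = c * (s * c) * s := by noncomm_ring
      _ = c * (c * s) * s := by rw [← hcs.eq]
      _ = c ^ 2 * s ^ 2 := by noncomm_ring
  have hc2s2nn : (0 : A) ≤ c ^ 2 * s ^ 2 := by
    rw [← hcs_sq]; exact CStarAlgebra.pow_nonneg hcsnn 2
  have hc2s2le1 : c ^ 2 * s ^ 2 ≤ 1 := by
    rw [← hcs_sq]
    calc (c * s) ^ 2 ≤ (c * s) ^ 1 :=
          CStarAlgebra.pow_antitone hcsnn hcsle1 (by norm_num)
      _ = c * s := pow_one _
      _ ≤ 1 := hcsle1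
  have hc2lec : c ^ 2 ≤ c := by
    calc c ^ 2 ≤ c ^ 1 := CStarAlgebra.pow_antitone hc0 hcle1 (by norm_num)
      _ = c := pow_one c
  have hs2les : s ^ 2 ≤ s := by
    calc s ^ 2 ≤ s ^ 1 := CStarAlgebra.pow_antitone hs0 hsle1 (by norm_num)
      _ = s := pow_one s
  exact ⟨h1, h2, h3, ⟨h4a.trans h4b.symm, h4a, h4c.trans h4d.symm, h4c⟩,
    ⟨hpc.symm.eq, hps.symm.eq, hcs.eq⟩,
    ⟨hc0, hcle1⟩, ⟨hs0, hsle1⟩, ⟨hcsnn, hcsle1⟩, ⟨hc2nn, hc2le1⟩, ⟨hs2nn, hs2le1⟩,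
    ⟨hc2s2nn, hc2s2le1⟩, hc2lec, hs2les⟩
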